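/- Let p be an odd prime, k a positive integer, and s ≥ 1 an integer. Then ρ_{k,0}(p^s) = Σ_{i=0}^{⌊(s−1)/2⌋} p^{ki + (s−2i−1)(k−1)} · ρ^(1)_{k,0}(p) + p^{⌊s/2⌋·k}. -/

import Mathlib

/-- `rho k lam n` is the number of `k`-tuples `(x₁,…,x_k) ∈ (ℤ/nℤ)^k` with
`x₁² + ⋯ + x_k² ≡ lam (mod n)`. -/
noncomputable def rho (k : ℕ) (lam : ℤ) (n : ℕ) : ℕ :=
  Nat.card {x : Fin k → ZMod n // ∑ i, x i ^ 2 = (lam : ZMod n)}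

/-- `rho1 k lam p s` is the number of `k`-tuples `(x₁,…,x_k) ∈ (ℤ/p^sℤ)^k` with
`x₁² + ⋯ + x_k² ≡ lam (mod p^s)` such that `p ∤ xᵢ` for at least one index `i`. -/
noncomputable def rho1 (k : ℕ) (lam : ℤ) (p s : ℕ) : ℕ :=
  Nat.card {x : Fin k → ZMod (p ^ s) //
    (∑ i, x i ^ 2 = (lam : ZMod (p ^ s))) ∧ ∃ i, ¬ (p : ZMod (p ^ s)) ∣ x i}

namespace RhoAux

open Finset


lemma castHom_eq_valCast {n m : ℕ} [NeZero n] (h : m ∣ n) (x : ZMod n) :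
    ZMod.castHom h (ZMod m) x = ((x.val : ℕ) : ZMod m) := by
  have hx : x = ((x.val : ℕ) : ZMod n) := (ZMod.natCast_rightInverse x).symm
  conv_lhs => rw [hx]
  exact map_natCast _ _

lemma pdvd_iff {p e : ℕ} (hp : 1 < p) (he : 1 ≤ e) (x : ZMod (p ^ e)) :
    (p : ZMod (p ^ e)) ∣ x ↔ p ∣ x.val := by
  haveI : NeZero (p ^ e) := ⟨pow_ne_zero _ (by omega)⟩
  constructor
  · rintro ⟨c, rfl⟩
    have h1 : (p : ZMod (p ^ e)) * c = ((p * c.val : ℕ) : ZMod (p ^ e)) := by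
      push_cast
      rw [ZMod.natCast_rightInverse c]
    rw [h1, ZMod.val_natCast]
    exact (Nat.dvd_mod_iff (dvd_pow_self p (by omega))).2 ⟨c.val, rfl⟩
  · rintro ⟨m, hm⟩
    refine ⟨((m : ℕ) : ZMod (p ^ e)), ?_⟩
    have : x = ((x.val : ℕ) : ZMod (p ^ e)) := (ZMod.natCast_rightInverse x).symm
    rw [this, hm]
    push_cast
    ring

lemma dvd_castHom_iff {p m : ℕ} (hp : 1 < p) (hm : 1 ≤ m) (x : ZMod (p ^ (m + 1))) :
    (p : ZMod (p ^ m)) ∣ ZMod.castHom (pow_dvd_pow p m.le_succ) (ZMod (p ^ m)) x ↔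
      (p : ZMod (p ^ (m + 1))) ∣ x := by
  haveI : NeZero (p ^ (m + 1)) := ⟨pow_ne_zero _ (by omega)⟩
  haveI : NeZero (p ^ m) := ⟨pow_ne_zero _ (by omega)⟩
  rw [pdvd_iff hp hm, pdvd_iff hp (by omega), castHom_eq_valCast, ZMod.val_natCast]
  exact Nat.dvd_mod_iff (dvd_pow_self p (by omega))

/-- Fiberwise counting. -/
lemma card_eq_of_fibers {α β : Type*} [Fintype α] [Fintype β]
    (P : α → Prop) (Q : β → Prop) (f : α → β)
    (hf : ∀ x, P x → Q (f x)) (c : ℕ)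
    (hc : ∀ y, Q y → Nat.card {x // P x ∧ f x = y} = c) :
    Nat.card {x // P x} = Nat.card {y // Q y} * c := by
  classical
  set F : {x // P x} → {y // Q y} := fun x => ⟨f x.1, hf _ x.2⟩ with hF
  have e1 : {x // P x} ≃ Σ y : {y // Q y}, {x : {x // P x} // F x = y} :=
    (Equiv.sigmaFiberEquiv F).symm
  rw [Nat.card_eq_fintype_card, Fintype.card_congr e1, Fintype.card_sigma]
  have key : ∀ y : {y // Q y}, Fintype.card {x : {x // P x} // F x = y} = c := by
    intro y
    have e2 : {x : {x // P x} // F x = y} ≃ {x // P x ∧ f x = (y : β)} := by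
      refine (Equiv.subtypeEquivRight (fun x => ?_)).trans
        (Equiv.subtypeSubtypeEquivSubtypeInter P (fun x => f x = (y : β)))
      rw [hF, Subtype.ext_iff]
    rw [← Nat.card_eq_fintype_card, Nat.card_congr e2, hc _ y.2]
  rw [Finset.sum_congr rfl (fun y _ => key y), Finset.sum_const, Finset.card_univ,
    Nat.card_eq_fintype_card, smul_eq_mul]

/-- number of solutions of a nontrivial linear equation over a finite field -/
lemma card_linear {k : ℕ} {F : Type*} [Field F] [Fintype F]
    (a : Fin k → F) (j : Fin k) (hj : a j ≠ 0) (b : F) :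
    Nat.card {t : Fin k → F // ∑ i, a i * t i = b} = Fintype.card F ^ (k - 1) := by
  classical
  set φ : (Fin k → F) → F := fun t => ∑ i, a i * t i with hφ
  have hadd : ∀ u v : Fin k → F, φ (u + v) = φ u + φ v := by
    intro u v
    simp [hφ, mul_add, Finset.sum_add_distrib]
  have step1 : ∀ b1 b2 : F, Nat.card {t // φ t = b1} = Nat.card {t // φ t = b2} := by
    intro b1 b2
    set t0 : Fin k → F := fun i => if i = j then (a j)⁻¹ * (b2 - b1) else 0 with ht0def
    have ht0 : φ t0 = b2 - b1 := by
      simp only [hφ, ht0def, mul_ite, mul_zero]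
      rw [Finset.sum_ite_eq' Finset.univ j (fun i => a i * ((a j)⁻¹ * (b2 - b1)))]
      simp [← mul_assoc, mul_inv_cancel₀ hj]
    refine Nat.card_congr ⟨fun u => ⟨↑u + t0, by rw [hadd, u.2, ht0]; ring⟩,
      fun u => ⟨↑u - t0, ?_⟩, fun u => by ext1; simp, fun u => by ext1; simp⟩
    have h2 := hadd (↑u - t0) t0
    simp only [sub_add_cancel] at h2
    rw [u.2, ht0] at h2
    linear_combination -h2
  have step2 : Fintype.card F ^ k = ∑ b' : F, Fintype.card {t // φ t = b'} := by
    rw [← Fintype.card_sigma, Fintype.card_congr (Equiv.sigmaFiberEquiv φ), Fintype.card_fun,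
      Fintype.card_fin]
  have step3 : ∀ b' : F, Fintype.card {t // φ t = b'} = Fintype.card {t // φ t = b} := by
    intro b'
    rw [← Nat.card_eq_fintype_card, ← Nat.card_eq_fintype_card]
    exact step1 b' b
  rw [Finset.sum_congr rfl (fun b' _ => step3 b'), Finset.sum_const, Finset.card_univ,
    smul_eq_mul] at step2
  have hk : k - 1 + 1 = k := by
    have : 0 < k := j.pos
    omega
  have hpos : 0 < Fintype.card F := Fintype.card_pos
  have : Fintype.card F * Fintype.card F ^ (k - 1) =
      Fintype.card F * Fintype.card {t // φ t = b} := by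
    rw [← pow_succ', hk]; exact step2
  rw [Nat.card_eq_fintype_card]
  exact (Nat.eq_of_mul_eq_mul_left hpos this).symm

section fiber

variable {p : ℕ} (hp : 1 < p) (m k : ℕ) (z : Fin k → ZMod (p ^ m))

/-- the lift of `z` by `t` -/
def lft (t : Fin k → ZMod p) : Fin k → ZMod (p ^ (m + 1)) :=
  fun i => (((z i).val + p ^ m * (t i).val : ℕ) : ZMod (p ^ (m + 1)))

include hp

lemma lft_lt (t : Fin k → ZMod p) (i : Fin k) :
    (z i).val + p ^ m * (t i).val < p ^ (m + 1) := by
  haveI : NeZero (p ^ m) := ⟨pow_ne_zero _ (by omega)⟩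
  haveI : NeZero p := ⟨by omega⟩
  have h1 : (z i).val < p ^ m := ZMod.val_lt _
  have h2 : (t i).val + 1 ≤ p := ZMod.val_lt _
  calc (z i).val + p ^ m * (t i).val < p ^ m * ((t i).val + 1) := by
        rw [Nat.mul_add, Nat.mul_one]; omega
    _ ≤ p ^ m * p := Nat.mul_le_mul_left _ h2
    _ = p ^ (m + 1) := (pow_succ p m).symm

lemma lft_cast (t : Fin k → ZMod p) (i : Fin k) :
    ZMod.castHom (pow_dvd_pow p m.le_succ) (ZMod (p ^ m)) (lft m k z t i) = z i := by
  haveI : NeZero (p ^ m) := ⟨pow_ne_zero _ (by omega)⟩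
  show ((ZMod.castHom (pow_dvd_pow p m.le_succ) (ZMod (p ^ m)))
      (((z i).val + p ^ m * (t i).val : ℕ) : ZMod (p ^ (m + 1)))) = z i
  rw [map_natCast]
  push_cast
  rw [← Nat.cast_pow, ZMod.natCast_self, ZMod.natCast_rightInverse (z i)]
  ring

lemma lft_injective : Function.Injective (lft m k z) := by
  haveI : NeZero (p ^ (m + 1)) := ⟨pow_ne_zero _ (by omega)⟩
  haveI : NeZero p := ⟨by omega⟩
  intro t t' h
  funext i
  have h1 : (((z i).val + p ^ m * (t i).val : ℕ) : ZMod (p ^ (m + 1)))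
      = (((z i).val + p ^ m * (t' i).val : ℕ) : ZMod (p ^ (m + 1))) := congrFun h i
  have h2 : (z i).val + p ^ m * (t i).val = (z i).val + p ^ m * (t' i).val := by
    have := congrArg ZMod.val h1
    rwa [ZMod.val_cast_of_lt (lft_lt hp m k z t i),
      ZMod.val_cast_of_lt (lft_lt hp m k z t' i)] at this
  have h3 : (t i).val = (t' i).val :=
    Nat.eq_of_mul_eq_mul_left (pow_pos (by omega) m) (Nat.add_left_cancel h2)
  exact ZMod.val_injective p h3

lemma lft_surjective (x : Fin k → ZMod (p ^ (m + 1)))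
    (hx : ∀ i, ZMod.castHom (pow_dvd_pow p m.le_succ) (ZMod (p ^ m)) (x i) = z i) :
    ∃ t, lft m k z t = x := by
  haveI : NeZero (p ^ (m + 1)) := ⟨pow_ne_zero _ (by omega)⟩
  haveI : NeZero (p ^ m) := ⟨pow_ne_zero _ (by omega)⟩
  haveI : NeZero p := ⟨by omega⟩
  refine ⟨fun i => (((x i).val / p ^ m : ℕ) : ZMod p), ?_⟩
  funext i
  have hz : (z i).val = (x i).val % p ^ m := by
    rw [← hx i, castHom_eq_valCast, ZMod.val_natCast]
  have hdlt : (x i).val / p ^ m < p := by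
    have h5 : (x i).val < p ^ m * p := by rw [← pow_succ]; exact ZMod.val_lt (x i)
    exact Nat.div_lt_of_lt_mul h5
  have hval : ((((x i).val / p ^ m : ℕ) : ZMod p)).val = (x i).val / p ^ m := by
    rw [ZMod.val_cast_of_lt hdlt]
  show ((((z i).val + p ^ m * ((((x i).val / p ^ m : ℕ) : ZMod p)).val : ℕ)) : ZMod (p ^ (m+1)))
      = x i
  rw [hval, hz, Nat.mod_add_div]
  exact ZMod.natCast_rightInverse (x i)

/-- counting a fiber of the reduction map, cut out by a compatible pair of predicates -/
lemma card_fiber_eq (P : (Fin k → ZMod (p ^ (m + 1))) → Prop) (Q : (Fin k → ZMod p) → Prop)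
    (hPQ : ∀ t, P (lft m k z t) ↔ Q t) :
    Nat.card {x : Fin k → ZMod (p ^ (m + 1)) //
        P x ∧ ∀ i, ZMod.castHom (pow_dvd_pow p m.le_succ) (ZMod (p ^ m)) (x i) = z i}
      = Nat.card {t : Fin k → ZMod p // Q t} := by
  refine (Nat.card_congr (Equiv.ofBijective
    (fun t : {t // Q t} => (⟨lft m k z t.1, (hPQ t.1).2 t.2, lft_cast hp m k z t.1⟩ :
      {x // P x ∧ ∀ i, ZMod.castHom (pow_dvd_pow p m.le_succ) (ZMod (p ^ m)) (x i) = z i}))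
    ⟨?_, ?_⟩)).symm
  · intro t t' h
    exact Subtype.ext (lft_injective hp m k z (congrArg Subtype.val h))
  · rintro ⟨x, hPx, hfib⟩
    obtain ⟨t, ht⟩ := lft_surjective hp m k z x hfib
    exact ⟨⟨t, (hPQ t).1 (ht ▸ hPx)⟩, Subtype.ext ht⟩

end fiber
lemma hensel_step {p : ℕ} (hp : p.Prime) (hodd : Odd p) (k m : ℕ) (hm : 1 ≤ m) :
    rho1 k 0 p (m + 1) = rho1 k 0 p m * p ^ (k - 1) := by
  haveI : Fact p.Prime := ⟨hp⟩
  have hp1 : 1 < p := hp.one_lt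
  haveI : NeZero (p ^ (m + 1)) := ⟨pow_ne_zero _ hp.pos.ne'⟩
  haveI : NeZero (p ^ m) := ⟨pow_ne_zero _ hp.pos.ne'⟩
  haveI : NeZero p := ⟨hp.pos.ne'⟩
  simp only [rho1, Int.cast_zero]
  refine card_eq_of_fibers _ _
    (fun x i => ZMod.castHom (pow_dvd_pow p m.le_succ) (ZMod (p ^ m)) (x i)) ?_ (p ^ (k - 1)) ?_
  · -- reduction maps primitive solutions to primitive solutions
    rintro x ⟨hx1, i, hi⟩
    constructor
    · have : ∀ j, (ZMod.castHom (pow_dvd_pow p m.le_succ) (ZMod (p ^ m)) (x j)) ^ 2 =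
          ZMod.castHom (pow_dvd_pow p m.le_succ) (ZMod (p ^ m)) (x j ^ 2) := fun j =>
        (map_pow _ _ _).symm
      rw [Finset.sum_congr rfl fun j _ => this j, ← map_sum, hx1, map_zero]
    · exact ⟨i, fun hdvd => hi ((dvd_castHom_iff hp1 hm (x i)).1 hdvd)⟩
  · -- each fiber over a primitive solution has p^(k-1) elements
    rintro y ⟨hysum, j, hyj⟩
    have ecng : {x : Fin k → ZMod (p ^ (m + 1)) //
        ((∑ i, x i ^ 2 = 0) ∧ ∃ i, ¬(p : ZMod (p ^ (m + 1))) ∣ x i) ∧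
          (fun i => ZMod.castHom (pow_dvd_pow p m.le_succ) (ZMod (p ^ m)) (x i)) = y} ≃
        {x : Fin k → ZMod (p ^ (m + 1)) //
        ((∑ i, x i ^ 2 = 0) ∧ ∃ i, ¬(p : ZMod (p ^ (m + 1))) ∣ x i) ∧
          ∀ i, ZMod.castHom (pow_dvd_pow p m.le_succ) (ZMod (p ^ m)) (x i) = y i} :=
      Equiv.subtypeEquivRight fun x => and_congr_right fun _ => funext_iff
    rw [Nat.card_congr ecng]
    -- set up the data for the linear equation
    set N : ℕ := ∑ i, (y i).val ^ 2 with hNdef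
    have hN : p ^ m ∣ N := by
      have h0 : ((N : ℕ) : ZMod (p ^ m)) = 0 := by
        rw [hNdef]
        push_cast
        simpa [ZMod.natCast_val, ZMod.cast_id] using hysum
      exact (ZMod.natCast_eq_zero_iff _ _).1 h0
    set c : ℕ := N / p ^ m with hcdef
    have hc' : p ^ m * c = N := Nat.mul_div_cancel' hN
    set a : Fin k → ZMod p := fun i => 2 * ((y i).val : ZMod p) with hadef
    set b : ZMod p := -((c : ℕ) : ZMod p) with hbdef
    -- divisibility of lifts
    have hprimlft : ∀ (t : Fin k → ZMod p) (i : Fin k),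
        ((p : ZMod (p ^ (m + 1))) ∣ lft m k y t i) ↔ (p : ZMod (p ^ m)) ∣ y i := by
      intro t i
      rw [pdvd_iff hp1 (by omega), pdvd_iff hp1 hm]
      have hv : (lft m k y t i).val = (y i).val + p ^ m * (t i).val :=
        ZMod.val_cast_of_lt (lft_lt hp1 m k y t i)
      rw [hv]
      have hpm : p ∣ p ^ m * (t i).val := Dvd.dvd.mul_right (dvd_pow_self p (by omega)) _
      constructor
      · intro h
        have h2 := Nat.dvd_sub h hpm
        rwa [Nat.add_sub_cancel] at h2
      · intro h
        exact dvd_add h hpm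
    -- the quadratic condition on lifts becomes a linear condition
    have hsumlft : ∀ t : Fin k → ZMod p, (∑ i, lft m k y t i ^ 2 = 0) ↔
        ((c : ZMod p) + 2 * ∑ i, ((y i).val : ZMod p) * t i = 0) := by
      intro t
      set L : ℕ := ∑ i, (y i).val * (t i).val with hLdef
      set S : ℕ := ∑ i, (t i).val ^ 2 with hSdef
      have hVnat : (∑ i, ((y i).val + p ^ m * (t i).val) ^ 2) =
          N + p ^ m * (2 * L) + p ^ m * (p ^ m * S) := by
        simp only [hNdef, hLdef, hSdef, Finset.mul_sum, ← Finset.sum_add_distrib]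
        exact Finset.sum_congr rfl fun i _ => by ring
      have hVsum : ∑ i, lft m k y t i ^ 2 =
          ((∑ i, ((y i).val + p ^ m * (t i).val) ^ 2 : ℕ) : ZMod (p ^ (m + 1))) := by
        rw [Nat.cast_sum]
        refine Finset.sum_congr rfl fun i _ => ?_
        show ((((y i).val + p ^ m * (t i).val : ℕ)) : ZMod (p ^ (m + 1))) ^ 2 = _
        push_cast
        ring
      rw [hVsum, hVnat]
      rw [ZMod.natCast_eq_zero_iff]
      have hfac : N + p ^ m * (2 * L) + p ^ m * (p ^ m * S) =
          p ^ m * (c + 2 * L + p ^ m * S) := by rw [← hc']; ring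
      have hdd : p ^ (m + 1) ∣ p ^ m * (c + 2 * L + p ^ m * S) ↔
          p ∣ (c + 2 * L + p ^ m * S) := by
        rw [pow_succ, Nat.mul_dvd_mul_iff_left (pow_pos hp.pos m)]
      rw [hfac, hdd]
      have hpmS : p ∣ p ^ m * S := Dvd.dvd.mul_right (dvd_pow_self p (by omega)) _
      have step : p ∣ c + 2 * L + p ^ m * S ↔ p ∣ c + 2 * L := by
        constructor
        · intro h
          have h2 := Nat.dvd_sub h hpmS
          rwa [Nat.add_sub_cancel] at h2
        · intro h
          exact dvd_add h hpmS
      rw [step, ← ZMod.natCast_eq_zero_iff]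
      have hcast : ((c + 2 * L : ℕ) : ZMod p) =
          (c : ZMod p) + 2 * ∑ i, ((y i).val : ZMod p) * t i := by
        rw [hLdef]
        push_cast
        simp [ZMod.natCast_val, ZMod.cast_id]
      rw [hcast]
  -- now apply the fiber lemma with the linear predicate
    rw [card_fiber_eq hp1 m k y _ (fun t => ∑ i, a i * t i = b) ?_]
    · have hj2 : (2 : ZMod p) ≠ 0 := by
        have hnd : ¬ (p ∣ 2) := by
          intro h
          have hle : p ≤ 2 := Nat.le_of_dvd (by norm_num) h
          have hpe : p = 2 := by omega
          rw [hpe] at hodd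
          exact (by decide : ¬ Odd 2) hodd
        rw [show (2 : ZMod p) = ((2 : ℕ) : ZMod p) by norm_cast, Ne,
          ZMod.natCast_eq_zero_iff]
        exact hnd
      have hyj' : ((y j).val : ZMod p) ≠ 0 := by
        rw [Ne, ZMod.natCast_eq_zero_iff]
        rwa [pdvd_iff hp1 hm] at hyj
      have hja : a j ≠ 0 := mul_ne_zero hj2 hyj'
      rw [card_linear a j hja b, ZMod.card]
    · intro t
      constructor
      · rintro ⟨h1, -⟩
        have h2 := (hsumlft t).1 h1
        have h3 : ∑ i, a i * t i = 2 * ∑ i, ((y i).val : ZMod p) * t i := by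
          rw [Finset.mul_sum]
          exact Finset.sum_congr rfl fun i _ => (mul_assoc _ _ _)
        rw [h3, hbdef]
        linear_combination h2
      · intro hlin
        have h3 : 2 * ∑ i, ((y i).val : ZMod p) * t i = b := by
          rw [← hlin, Finset.mul_sum]
          exact (Finset.sum_congr rfl fun i _ => (mul_assoc _ _ _)).symm
        refine ⟨(hsumlft t).2 ?_, ⟨j, ?_⟩⟩
        · rw [h3, hbdef]
          ring
        · rw [hprimlft t j]
          exact hyj


lemma rho_pow_zero (k : ℕ) : rho k 0 (1 : ℕ) = 1 := by
  haveI : Subsingleton {x : Fin k → ZMod 1 // ∑ i, x i ^ 2 = ((0 : ℤ) : ZMod 1)} :=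
    ⟨fun a b => Subtype.ext (Subsingleton.elim _ _)⟩
  haveI : Nonempty {x : Fin k → ZMod 1 // ∑ i, x i ^ 2 = ((0 : ℤ) : ZMod 1)} :=
    ⟨⟨fun _ => 0, Subsingleton.elim _ _⟩⟩
  rw [rho]
  exact Nat.card_unique

lemma decomp {p : ℕ} (hp : 1 < p) (k e : ℕ) :
    rho k 0 (p ^ e) = rho1 k 0 p e +
      Nat.card {x : Fin k → ZMod (p ^ e) //
        (∑ i, x i ^ 2 = 0) ∧ ∀ i, (p : ZMod (p ^ e)) ∣ x i} := by
  haveI : NeZero (p ^ e) := ⟨pow_ne_zero _ (by omega)⟩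
  classical
  simp only [rho, rho1, Int.cast_zero]
  set S : (Fin k → ZMod (p ^ e)) → Prop := fun x => ∑ i, x i ^ 2 = 0 with hS
  set Pr : (Fin k → ZMod (p ^ e)) → Prop := fun x => ∃ i, ¬ (p : ZMod (p ^ e)) ∣ x i with hPr
  have e1 : {x // S x} ≃ {a : {x // S x} // Pr ↑a} ⊕ {a : {x // S x} // ¬ Pr ↑a} :=
    (Equiv.sumCompl _).symm
  rw [Nat.card_congr e1, Nat.card_sum]
  congr 1
  · exact Nat.card_congr (Equiv.subtypeSubtypeEquivSubtypeInter S Pr)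
  · refine Nat.card_congr ((Equiv.subtypeSubtypeEquivSubtypeInter S (fun x => ¬ Pr x)).trans
      (Equiv.subtypeEquivRight fun x => ?_))
    simp only [hPr, not_exists, not_not]
    exact Iff.rfl

lemma imprim_one {p : ℕ} (hp : 1 < p) (k : ℕ) :
    Nat.card {x : Fin k → ZMod (p ^ 1) //
      (∑ i, x i ^ 2 = 0) ∧ ∀ i, (p : ZMod (p ^ 1)) ∣ x i} = 1 := by
  haveI : NeZero (p ^ 1) := ⟨pow_ne_zero _ (by omega)⟩
  have key : ∀ x : Fin k → ZMod (p ^ 1),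
      ((∑ i, x i ^ 2 = 0) ∧ ∀ i, (p : ZMod (p ^ 1)) ∣ x i) ↔ x = fun _ => 0 := by
    intro x
    constructor
    · rintro ⟨-, h⟩
      funext i
      have h1 := (pdvd_iff hp le_rfl (x i)).1 (h i)
      have h2 : (x i).val < p := by simpa [pow_one] using ZMod.val_lt (x i)
      have h3 : (x i).val = 0 := Nat.eq_zero_of_dvd_of_lt h1 h2
      exact ZMod.val_injective _ (by rw [h3, ZMod.val_zero])
    · rintro rfl
      exact ⟨by simp, fun i => dvd_zero _⟩
  haveI : Subsingleton {x : Fin k → ZMod (p ^ 1) //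
      (∑ i, x i ^ 2 = 0) ∧ ∀ i, (p : ZMod (p ^ 1)) ∣ x i} :=
    ⟨fun a b => Subtype.ext (((key _).1 a.2).trans ((key _).1 b.2).symm)⟩
  haveI : Nonempty {x : Fin k → ZMod (p ^ 1) //
      (∑ i, x i ^ 2 = 0) ∧ ∀ i, (p : ZMod (p ^ 1)) ∣ x i} :=
    ⟨⟨fun _ => 0, (key _).2 rfl⟩⟩
  exact Nat.card_unique

lemma imprim_two {p : ℕ} (hp : 1 < p) (k s : ℕ) :
    Nat.card {x : Fin k → ZMod (p ^ (s + 2)) //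
      (∑ i, x i ^ 2 = 0) ∧ ∀ i, (p : ZMod (p ^ (s + 2))) ∣ x i}
    = rho k 0 (p ^ s) * p ^ k := by
  haveI : NeZero (p ^ (s + 2)) := ⟨pow_ne_zero _ (by omega)⟩
  haveI : NeZero (p ^ (s + 1)) := ⟨pow_ne_zero _ (by omega)⟩
  haveI : NeZero (p ^ s) := ⟨pow_ne_zero _ (by omega)⟩
  haveI : NeZero p := ⟨by omega⟩
  have hdvd : (p : ℕ) ^ s ∣ p ^ (s + 1) := pow_dvd_pow p s.le_succ
  set G : (Fin k → ZMod (p ^ (s + 1))) → (Fin k → ZMod (p ^ (s + 2))) :=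
    fun y i => ((p * (y i).val : ℕ) : ZMod (p ^ (s + 2))) with hG
  have hGsum : ∀ y, (∑ i, G y i ^ 2 = 0) ↔
      (∑ i, (ZMod.castHom hdvd (ZMod (p ^ s)) (y i)) ^ 2 = 0) := by
    intro y
    set M : ℕ := ∑ i, (y i).val ^ 2 with hM
    have h1 : ∑ i, G y i ^ 2 = ((p ^ 2 * M : ℕ) : ZMod (p ^ (s + 2))) := by
      rw [hM, Finset.mul_sum, Nat.cast_sum]
      refine Finset.sum_congr rfl fun i _ => ?_
      show ((p * (y i).val : ℕ) : ZMod (p ^ (s + 2))) ^ 2 = _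
      push_cast
      ring
    have h2 : ∑ i, (ZMod.castHom hdvd (ZMod (p ^ s)) (y i)) ^ 2 = ((M : ℕ) : ZMod (p ^ s)) := by
      rw [hM, Nat.cast_sum]
      refine Finset.sum_congr rfl fun i _ => ?_
      rw [castHom_eq_valCast]
      push_cast
      ring
    rw [h1, h2, ZMod.natCast_eq_zero_iff, ZMod.natCast_eq_zero_iff,
      show (p : ℕ) ^ (s + 2) = p ^ 2 * p ^ s from by ring,
      Nat.mul_dvd_mul_iff_left (pow_pos (by omega : 0 < p) 2)]
  -- Stage 1: strip one factor of p off every coordinate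
  have hdv : ∀ (y : Fin k → ZMod (p ^ (s + 1))) (i : Fin k),
      (p : ZMod (p ^ (s + 2))) ∣ G y i := by
    intro y i
    show (p : ZMod (p ^ (s + 2))) ∣ ((p * (y i).val : ℕ) : ZMod (p ^ (s + 2)))
    push_cast
    exact dvd_mul_right _ _
  have hinj : Function.Injective G := by
    intro y y' h0
    funext i
    have h1 : ((p * (y i).val : ℕ) : ZMod (p ^ (s + 2)))
        = ((p * (y' i).val : ℕ) : ZMod (p ^ (s + 2))) := congrFun h0 i
    have hlt : ∀ w : ZMod (p ^ (s + 1)), p * w.val < p ^ (s + 2) := by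
      intro w
      calc p * w.val < p * p ^ (s + 1) :=
            (Nat.mul_lt_mul_left (show 0 < p by omega)).mpr (ZMod.val_lt w)
        _ = p ^ (s + 2) := by ring
    have h2 : p * (y i).val = p * (y' i).val := by
      have h3 := congrArg ZMod.val h1
      rwa [ZMod.val_cast_of_lt (hlt (y i)), ZMod.val_cast_of_lt (hlt (y' i))] at h3
    exact ZMod.val_injective _ (Nat.eq_of_mul_eq_mul_left (by omega) h2)
  have stage1 : Nat.card {x : Fin k → ZMod (p ^ (s + 2)) //
      (∑ i, x i ^ 2 = 0) ∧ ∀ i, (p : ZMod (p ^ (s + 2))) ∣ x i}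
      = Nat.card {y : Fin k → ZMod (p ^ (s + 1)) //
        ∑ i, (ZMod.castHom hdvd (ZMod (p ^ s)) (y i)) ^ 2 = 0} := by
    have hbij : Function.Bijective
        (fun y : {y : Fin k → ZMod (p ^ (s + 1)) //
            ∑ i, (ZMod.castHom hdvd (ZMod (p ^ s)) (y i)) ^ 2 = 0} =>
          (⟨G y.1, (hGsum y.1).2 y.2, hdv y.1⟩ : {x : Fin k → ZMod (p ^ (s + 2)) //
            (∑ i, x i ^ 2 = 0) ∧ ∀ i, (p : ZMod (p ^ (s + 2))) ∣ x i})) := by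
      constructor
      · intro u v h
        exact Subtype.ext (hinj (congrArg Subtype.val h))
      · rintro ⟨x, hx1, hx2⟩
        have hdvd' : ∀ i, p ∣ (x i).val := fun i => (pdvd_iff hp (by omega) (x i)).1 (hx2 i)
        set y : Fin k → ZMod (p ^ (s + 1)) := fun i => (((x i).val / p : ℕ) : ZMod (p ^ (s + 1)))
          with hy
        have hGy : G y = x := by
          funext i
          show ((p * ((((x i).val / p : ℕ) : ZMod (p ^ (s + 1)))).val : ℕ) : ZMod (p ^ (s + 2)))
            = x i
          have hmlt : (x i).val / p < p ^ (s + 1) := by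
            refine Nat.div_lt_of_lt_mul ?_
            calc (x i).val < p ^ (s + 2) := ZMod.val_lt (x i)
              _ = p * p ^ (s + 1) := by ring
          rw [ZMod.val_cast_of_lt hmlt, Nat.mul_div_cancel' (hdvd' i)]
          exact ZMod.natCast_rightInverse (x i)
        exact ⟨⟨y, (hGsum y).1 (by rw [hGy]; exact hx1)⟩, Subtype.ext hGy⟩
    exact (Nat.card_congr (Equiv.ofBijective _ hbij)).symm
  rw [stage1]
  -- Stage 2: count fibers of the reduction to `ZMod (p ^ s)`
  rw [rho]
  simp only [Int.cast_zero]
  refine card_eq_of_fibers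
    (fun y : Fin k → ZMod (p ^ (s + 1)) => ∑ i, (ZMod.castHom hdvd (ZMod (p ^ s)) (y i)) ^ 2 = 0)
    (fun z : Fin k → ZMod (p ^ s) => ∑ i, z i ^ 2 = 0)
    (fun (y : Fin k → ZMod (p ^ (s + 1))) i => ZMod.castHom hdvd (ZMod (p ^ s)) (y i))
    (fun y hy => hy) (p ^ k) ?_
  intro z hz
  have ecng : {y : Fin k → ZMod (p ^ (s + 1)) //
      (∑ i, (ZMod.castHom hdvd (ZMod (p ^ s)) (y i)) ^ 2 = 0) ∧
        (fun i => ZMod.castHom hdvd (ZMod (p ^ s)) (y i)) = z} ≃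
      {y : Fin k → ZMod (p ^ (s + 1)) //
      (∑ i, (ZMod.castHom hdvd (ZMod (p ^ s)) (y i)) ^ 2 = 0) ∧
        ∀ i, ZMod.castHom hdvd (ZMod (p ^ s)) (y i) = z i} :=
    Equiv.subtypeEquivRight fun y => and_congr_right fun _ => funext_iff
  rw [Nat.card_congr ecng]
  rw [card_fiber_eq hp s k z _ (fun _ => True) ?_]
  · rw [Nat.card_congr (Equiv.subtypeUnivEquiv fun _ => trivial), Nat.card_eq_fintype_card,
      Fintype.card_fun, ZMod.card, Fintype.card_fin]
  · intro t
    have hcast : ∑ i, (ZMod.castHom hdvd (ZMod (p ^ s)) (lft s k z t i)) ^ 2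
        = ∑ i, z i ^ 2 :=
      Finset.sum_congr rfl fun i _ => by rw [lft_cast hp s k z t i]
    exact iff_of_true (by rw [hcast]; exact hz) trivial


lemma rho1_pow {p : ℕ} (hp : p.Prime) (hodd : Odd p) (k : ℕ) :
    ∀ s : ℕ, 1 ≤ s → rho1 k 0 p s = p ^ ((s - 1) * (k - 1)) * rho1 k 0 p 1 := by
  intro s
  induction s with
  | zero => omega
  | succ n ih =>
    intro _
    rcases Nat.eq_or_lt_of_le (show 1 ≤ n + 1 from by omega) with h | h
    · rw [← h]
      simp
    · have hn : 1 ≤ n := by omega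
      rw [hensel_step hp hodd k n hn, ih hn, mul_right_comm, ← pow_add]
      congr 2
      have h1 : n + 1 - 1 = n := by omega
      have h2 : n - 1 + 1 = n := by omega
      rw [h1]
      conv_rhs => rw [← h2]
      ring

lemma rho_rec {p : ℕ} (hp : p.Prime) (hodd : Odd p) (k s : ℕ) :
    rho k 0 (p ^ (s + 2)) = p ^ ((s + 1) * (k - 1)) * rho1 k 0 p 1 + p ^ k * rho k 0 (p ^ s) := by
  rw [decomp hp.one_lt k (s + 2), imprim_two hp.one_lt k s,
    rho1_pow hp hodd k (s + 2) (by omega)]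
  have h1 : s + 2 - 1 = s + 1 := by omega
  rw [h1]
  ring

lemma main_aux {p : ℕ} (hp : p.Prime) (hodd : Odd p) (k : ℕ) (hk : 0 < k) :
    ∀ n : ℕ, rho k 0 (p ^ (n + 1)) =
      ∑ i ∈ Finset.range ((n + 1 - 1) / 2 + 1),
        p ^ (k * i + (n + 1 - 2 * i - 1) * (k - 1)) * rho1 k 0 p 1
      + p ^ ((n + 1) / 2 * k) := by
  intro n
  induction n using Nat.strong_induction_on with
  | _ n ih =>
    match n with
    | 0 =>
      rw [decomp hp.one_lt k 1, imprim_one hp.one_lt k]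
      simp
    | 1 =>
      have h := rho_rec hp hodd k 0
      rw [show (0 : ℕ) + 2 = 1 + 1 from rfl] at h
      rw [h, pow_zero, rho_pow_zero k]
      simp [Finset.sum_range_one]
    | (m + 2) =>
      have h := rho_rec hp hodd k (m + 1)
      rw [show m + 1 + 2 = m + 2 + 1 from rfl] at h
      rw [h, ih m (by omega)]
      have hsum : ∀ i ∈ Finset.range ((m + 1 - 1) / 2 + 1),
          p ^ k * (p ^ (k * i + (m + 1 - 2 * i - 1) * (k - 1)) * rho1 k 0 p 1)
          = p ^ (k * (i + 1) + (m + 2 + 1 - 2 * (i + 1) - 1) * (k - 1)) * rho1 k 0 p 1 := by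
        intro i hi
        have hile : i ≤ m / 2 := by
          have := Finset.mem_range.1 hi
          omega
        rw [← mul_assoc, ← pow_add]
        congr 2
        have e1 : m + 1 - 2 * i - 1 = m - 2 * i := by omega
        have e2 : m + 2 + 1 - 2 * (i + 1) - 1 = m - 2 * i := by omega
        rw [e1, e2]
        ring
      have hpow : p ^ k * p ^ ((m + 1) / 2 * k) = p ^ ((m + 2 + 1) / 2 * k) := by
        rw [← pow_add]
        congr 1
        have e3 : (m + 2 + 1) / 2 = (m + 1) / 2 + 1 := by omega
        rw [e3]
        ring
      have hL : p ^ k * (∑ i ∈ Finset.range ((m + 1 - 1) / 2 + 1),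
            p ^ (k * i + (m + 1 - 2 * i - 1) * (k - 1)) * rho1 k 0 p 1
            + p ^ ((m + 1) / 2 * k))
          = ∑ i ∈ Finset.range ((m + 1 - 1) / 2 + 1),
            p ^ (k * (i + 1) + (m + 2 + 1 - 2 * (i + 1) - 1) * (k - 1)) * rho1 k 0 p 1
            + p ^ ((m + 2 + 1) / 2 * k) := by
        rw [Nat.mul_add, Finset.mul_sum, Finset.sum_congr rfl hsum, hpow]
      rw [hL]
      have hidx : (m + 2 + 1 - 1) / 2 + 1 = ((m + 1 - 1) / 2 + 1) + 1 := by omega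
      have hf0 : p ^ (k * 0 + (m + 2 + 1 - 2 * 0 - 1) * (k - 1)) * rho1 k 0 p 1
          = p ^ ((m + 1 + 1) * (k - 1)) * rho1 k 0 p 1 := by
        congr 2
        have e4 : m + 2 + 1 - 2 * 0 - 1 = m + 1 + 1 := by omega
        rw [e4]
        ring
      have hR : ∑ i ∈ Finset.range ((m + 2 + 1 - 1) / 2 + 1),
            p ^ (k * i + (m + 2 + 1 - 2 * i - 1) * (k - 1)) * rho1 k 0 p 1
          = ∑ i ∈ Finset.range ((m + 1 - 1) / 2 + 1),
            p ^ (k * (i + 1) + (m + 2 + 1 - 2 * (i + 1) - 1) * (k - 1)) * rho1 k 0 p 1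
            + p ^ ((m + 1 + 1) * (k - 1)) * rho1 k 0 p 1 := by
        rw [hidx, Finset.sum_range_succ'
          (fun i => p ^ (k * i + (m + 2 + 1 - 2 * i - 1) * (k - 1)) * rho1 k 0 p 1)
          ((m + 1 - 1) / 2 + 1), hf0]
      rw [hR]
      ring
end RhoAux

/-- For an odd prime `p`,
`ρ_{k,0}(p^s) = Σ_{i=0}^{⌊(s−1)/2⌋} p^{ki+(s−2i−1)(k−1)} · ρ^{(1)}_{k,0}(p) + p^{⌊s/2⌋k}`. -/
theorem rho_odd_prime_pow_zero (p : ℕ) (hp : p.Prime) (hodd : Odd p) (k : ℕ) (hk : 0 < k)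
    (s : ℕ) (hs : 1 ≤ s) :
    rho k 0 (p ^ s) =
      ∑ i ∈ Finset.range ((s - 1) / 2 + 1),
        p ^ (k * i + (s - 2 * i - 1) * (k - 1)) * rho1 k 0 p 1
      + p ^ (s / 2 * k) := by
  obtain ⟨n, rfl⟩ : ∃ n, s = n + 1 := ⟨s - 1, by omega⟩
  exact RhoAux.main_aux hp hodd k hk n
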